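/- The function f : ℝ → ℝ defined by f(t) = t/(1 − e^{−t}) is convex on the open interval (0, ∞). -/

import Mathlib

open Real Set

private noncomputable def F0 : ℝ → ℝ := fun t => t / (1 - Real.exp (-t))
private noncomputable def F1 : ℝ → ℝ := fun t =>
  ((1 - Real.exp (-t)) - t * Real.exp (-t)) / (1 - Real.exp (-t)) ^ 2
private noncomputable def F2 : ℝ → ℝ := fun t =>
  Real.exp (-t) * (t + t * Real.exp (-t) - 2 + 2 * Real.exp (-t)) / (1 - Real.exp (-t)) ^ 3
private noncomputable def G : ℝ → ℝ := fun t =>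
  t + t * Real.exp (-t) - 2 + 2 * Real.exp (-t)

private lemma hu {t : ℝ} (ht : 0 < t) : 0 < 1 - Real.exp (-t) := by
  have : Real.exp (-t) < 1 := Real.exp_lt_one_iff.mpr (by linarith)
  linarith

private lemma hasDerivAt_denom (t : ℝ) :
    HasDerivAt (fun s : ℝ => 1 - Real.exp (-s)) (Real.exp (-t)) t := by
  have h : HasDerivAt (fun s : ℝ => Real.exp (-s)) (-Real.exp (-t)) t := by
    simpa using (hasDerivAt_id t).neg.exp
  exact ((hasDerivAt_const t (1 : ℝ)).sub h).congr_deriv (by ring)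

private lemma hasDerivAt_F0 {t : ℝ} (ht : 0 < t) : HasDerivAt F0 (F1 t) t := by
  have hne : (1 - Real.exp (-t)) ≠ 0 := ne_of_gt (hu ht)
  have h := (hasDerivAt_id t).div (hasDerivAt_denom t) hne
  exact h.congr_deriv (by simp only [F1, id, one_mul])

private lemma hasDerivAt_G (t : ℝ) :
    HasDerivAt G (1 - (t + 1) * Real.exp (-t)) t := by
  have he : HasDerivAt (fun s : ℝ => Real.exp (-s)) (-Real.exp (-t)) t := by
    simpa using (hasDerivAt_id t).neg.exp
  have h1 : HasDerivAt (fun s : ℝ => s * Real.exp (-s))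
      (1 * Real.exp (-t) + t * (-Real.exp (-t))) t := (hasDerivAt_id t).mul he
  have h := (((hasDerivAt_id t).add h1).sub (hasDerivAt_const t (2:ℝ))).add
    ((hasDerivAt_const t (2:ℝ)).mul he)
  exact h.congr_deriv (by ring)

private lemma G_nonneg {t : ℝ} (ht : 0 < t) : 0 ≤ G t := by
  have hmono : MonotoneOn G (Set.Ici (0:ℝ)) := by
    apply monotoneOn_of_deriv_nonneg (convex_Ici 0)
    · have : Continuous G := by unfold G; continuity
      exact this.continuousOn
    · intro x hx
      exact (hasDerivAt_G x).differentiableAt.differentiableWithinAt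
    · intro x hx
      rw [(hasDerivAt_G x).deriv]
      have h := Real.add_one_le_exp x
      have hx0 : (0:ℝ) < Real.exp (-x) := Real.exp_pos _
      have : (x + 1) * Real.exp (-x) ≤ 1 := by
        rw [Real.exp_neg]
        rw [mul_inv_le_iff₀ (Real.exp_pos x)]
        linarith
      linarith
  have h0 : G 0 = 0 := by simp [G]
  have := hmono (Set.mem_Ici.mpr le_rfl) (Set.mem_Ici.mpr ht.le) ht.le
  linarith [h0 ▸ this]

private lemma hasDerivAt_F1 {t : ℝ} (ht : 0 < t) : HasDerivAt F1 (F2 t) t := by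
  have hne : (1 - Real.exp (-t)) ≠ 0 := ne_of_gt (hu ht)
  have he : HasDerivAt (fun s : ℝ => Real.exp (-s)) (-Real.exp (-t)) t := by
    simpa using (hasDerivAt_id t).neg.exp
  -- numerator
  have hN : HasDerivAt (fun s : ℝ => (1 - Real.exp (-s)) - s * Real.exp (-s))
      (t * Real.exp (-t)) t := by
    have h1 : HasDerivAt (fun s : ℝ => s * Real.exp (-s))
        (1 * Real.exp (-t) + t * (-Real.exp (-t))) t := (hasDerivAt_id t).mul he
    have h := (hasDerivAt_denom t).sub h1
    exact h.congr_deriv (by ring)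
  -- denominator
  have hD : HasDerivAt (fun s : ℝ => (1 - Real.exp (-s)) ^ 2)
      (2 * (1 - Real.exp (-t)) * Real.exp (-t)) t := by
    have := (hasDerivAt_denom t).pow 2
    exact this.congr_deriv (by norm_num)
  have hD0 : ((1 - Real.exp (-t)) ^ 2) ≠ 0 := pow_ne_zero 2 hne
  have h := hN.div hD hD0
  have : (t * Real.exp (-t) * (1 - Real.exp (-t)) ^ 2 -
      ((1 - Real.exp (-t)) - t * Real.exp (-t)) * (2 * (1 - Real.exp (-t)) * Real.exp (-t))) /
      ((1 - Real.exp (-t)) ^ 2) ^ 2 = F2 t := by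
    simp only [F2]
    rw [div_eq_div_iff (by positivity) (by positivity)]
    ring
  rw [this] at h
  exact h

/-- The function `f(t) = t / (1 − e^{−t})` is convex on `(0, ∞)`. -/
theorem stmt_1 :
    ConvexOn ℝ (Set.Ioi (0 : ℝ)) (fun t : ℝ => t / (1 - Real.exp (-t))) := by
  have key : ConvexOn ℝ (Set.Ioi (0 : ℝ)) F0 := by
    apply convexOn_of_deriv2_nonneg (convex_Ioi 0)
    · intro x hx
      exact (hasDerivAt_F0 hx).differentiableAt.continuousAt.continuousWithinAt
    · intro x hx
      rw [interior_Ioi] at hx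
      exact (hasDerivAt_F0 hx).differentiableAt.differentiableWithinAt
    · intro x hx
      rw [interior_Ioi] at hx
      have heq : deriv F0 =ᶠ[nhds x] F1 := by
        filter_upwards [Ioi_mem_nhds hx] with y hy
        exact (hasDerivAt_F0 hy).deriv
      have : DifferentiableAt ℝ F1 x := (hasDerivAt_F1 hx).differentiableAt
      exact (this.congr_of_eventuallyEq heq).differentiableWithinAt
    · intro x hx
      rw [interior_Ioi] at hx
      have heq : deriv F0 =ᶠ[nhds x] F1 := by
        filter_upwards [Ioi_mem_nhds hx] with y hy
        exact (hasDerivAt_F0 hy).deriv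
      have h2 : deriv (deriv F0) x = F2 x := by
        rw [Filter.EventuallyEq.deriv_eq heq]
        exact (hasDerivAt_F1 hx).deriv
      show 0 ≤ deriv^[2] F0 x
      rw [Function.iterate_succ, Function.iterate_one, Function.comp_apply, h2]
      have := G_nonneg hx
      have hu3 : (0:ℝ) < (1 - Real.exp (-x)) ^ 3 := pow_pos (hu hx) 3
      exact div_nonneg (mul_nonneg (Real.exp_pos _).le this) hu3.le
  exact key
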